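/- arXiv:2006.05008 — 2 statements merged into one kernel-verified Lean document; each statement's English description precedes it below -/
import Mathlib

section
/- Let H be a finite-dimensional real inner product space, T : H → H symmetric positive definite, W : H → H symmetric positive semidefinite, and τ > 0 such that ⟨T u, u⟩ ≥ (τ²/4)⟨W u, u⟩ for all u ∈ H. Then for all a, b ∈ H, the discrete energy ½⟨T ((a-b)/τ), (a-b)/τ⟩ + ½⟨W a, b⟩ is nonnegative. -/
open scoped RealInnerProductSpace

theorem stmt5 {H : Type*} [NormedAddCommGroup H] [InnerProductSpace ℝ H]
    [FiniteDimensional ℝ H]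
    (T W : H →ₗ[ℝ] H)
    (hTsym : ∀ x y : H, ⟪T x, y⟫ = ⟪x, T y⟫)
    (hTpos : ∀ u : H, u ≠ 0 → 0 < ⟪T u, u⟫)
    (hWsym : ∀ x y : H, ⟪W x, y⟫ = ⟪x, W y⟫)
    (hWpos : ∀ u : H, 0 ≤ ⟪W u, u⟫)
    (τ : ℝ) (hτ : 0 < τ)
    (hCFL : ∀ u : H, ⟪T u, u⟫ ≥ (τ^2/4) * ⟪W u, u⟫)
    (a b : H) :
    0 ≤ (1/2 : ℝ) * ⟪T ((1/τ) • (a - b)), (1/τ) • (a - b)⟫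
      + (1/2 : ℝ) * ⟪W a, b⟫ := by
  have hba : ⟪W b, a⟫ = ⟪W a, b⟫ := by
    rw [hWsym, real_inner_comm]
  have hpol : ⟪W a, b⟫
      = (1/4) * (⟪W (a+b), a+b⟫ - ⟪W (a-b), a-b⟫) := by
    rw [map_add, map_sub, inner_add_left, inner_sub_left, inner_add_right,
      inner_add_right, inner_sub_right, inner_sub_right, hba]
    ring
  have hT : ⟪T ((1/τ) • (a - b)), (1/τ) • (a - b)⟫
      = (1/τ)^2 * ⟪T (a-b), a-b⟫ := by
    rw [map_smul, real_inner_smul_left, real_inner_smul_right]; ring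
  have hCFL' := hCFL (a - b)
  have hW1 := hWpos (a + b)
  have hτ2 : (0:ℝ) < τ^2 := by positivity
  rw [hpol, hT]
  have key : (1/8 : ℝ) * ⟪W (a-b), a-b⟫ ≤ (1/2) * ((1/τ)^2 * ⟪T (a-b), a-b⟫) := by
    have h : (τ^2/4) * ⟪W (a-b), a-b⟫ ≤ ⟪T (a-b), a-b⟫ := hCFL'
    rw [div_mul_eq_mul_div, div_le_iff₀ (by norm_num : (0:ℝ) < 4)] at h
    calc (1/8 : ℝ) * ⟪W (a-b), a-b⟫
        = (τ^2 * ⟪W (a-b), a-b⟫ / τ^2) / 8 := by field_simp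
      _ ≤ (⟪T (a-b), a-b⟫ * 4 / τ^2) / 8 := by
          gcongr
      _ = (1/2) * ((1/τ)^2 * ⟪T (a-b), a-b⟫) := by field_simp; ring
  nlinarith [key, hW1]
end

section
/- Let H be a finite-dimensional real inner product space, T : H → H symmetric positive definite, Φ : S → ℝ with Φ(Σ) = ½⟨A Σ, Σ⟩, A symmetric positive definite on the finite-dimensional inner product space S, L : S → H linear, τ > 0, η ∈ (0,4). Assume the CFL condition Φ(Σ) ≥ (τ²/(4-η)) ⟨L Σ, T⁻¹ L Σ⟩ for all Σ ∈ S. Then for any v⁺, v ∈ H and Σ ∈ S satisfying T(v⁺ - v)/τ + L Σ = 0, the quantity ½⟨T v⁺, v⟩ + Φ(Σ) is bounded below by ½⟨T ((v⁺+v)/2), (v⁺+v)/2⟩ + (η/4) Φ(Σ); in particular it is nonnegative. -/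
open scoped RealInnerProductSpace

theorem stmt18 {H S : Type*} [NormedAddCommGroup H] [InnerProductSpace ℝ H]
    [FiniteDimensional ℝ H] [NormedAddCommGroup S] [InnerProductSpace ℝ S]
    [FiniteDimensional ℝ S]
    (T Tinv : H →ₗ[ℝ] H)
    (hTsym : ∀ x y : H, ⟪T x, y⟫ = ⟪x, T y⟫)
    (hTpos : ∀ u : H, u ≠ 0 → 0 < ⟪T u, u⟫)
    (hTinv : ∀ x, T (Tinv x) = x) (hTinv' : ∀ x, Tinv (T x) = x)
    (A : S →ₗ[ℝ] S)
    (hAsym : ∀ x y : S, ⟪A x, y⟫ = ⟪x, A y⟫)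
    (hApos : ∀ Sg : S, Sg ≠ 0 → 0 < ⟪A Sg, Sg⟫)
    (Φ : S → ℝ) (hΦ : ∀ Sg : S, Φ Sg = (1/2 : ℝ) * ⟪A Sg, Sg⟫)
    (L : S →ₗ[ℝ] H)
    (τ η : ℝ) (hτ : 0 < τ) (hη : 0 < η) (hη4 : η < 4)
    (hCFL : ∀ Sg : S, Φ Sg ≥ (τ^2/(4 - η)) * ⟪L Sg, Tinv (L Sg)⟫)
    (vp v : H) (Sg : S)
    (hupd : (1/τ) • T (vp - v) + L Sg = 0) :
    (1/2 : ℝ) * ⟪T ((1/2 : ℝ) • (vp + v)), (1/2 : ℝ) • (vp + v)⟫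
        + (η/4) * Φ Sg
      ≤ (1/2 : ℝ) * ⟪T vp, v⟫ + Φ Sg
    ∧ 0 ≤ (1/2 : ℝ) * ⟪T vp, v⟫ + Φ Sg := by
  have hTnn : ∀ u : H, 0 ≤ ⟪T u, u⟫ := by
    intro u
    rcases eq_or_ne u 0 with h | h
    · simp [h]
    · exact (hTpos u h).le
  set m : H := (1/2 : ℝ) • (vp + v) with hm
  set d : H := (1/2 : ℝ) • (vp - v) with hd
  -- d = -(τ/2) • Tinv (L Sg)
  have hTvpv : T (vp - v) = (-τ) • L Sg := by
    have := hupd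
    have h1 : (1/τ) • T (vp - v) = - L Sg := by
      have := eq_neg_of_add_eq_zero_left hupd
      exact this
    have := congrArg (fun x => τ • x) h1
    simp only [smul_smul] at this
    rw [show τ * (1/τ) = 1 by field_simp] at this
    simp at this
    rw [map_sub]
    rw [this]; simp [neg_smul]
  have hdval : d = (-(τ/2)) • Tinv (L Sg) := by
    have h2 : vp - v = (-τ) • Tinv (L Sg) := by
      have := congrArg Tinv hTvpv
      rw [hTinv'] at this
      simpa using this
    rw [hd, h2, smul_smul]; ring_nf
  have hTd : ⟪T d, d⟫ = (τ^2/4) * ⟪L Sg, Tinv (L Sg)⟫ := by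
    rw [hdval]
    simp only [map_smul, inner_smul_left, inner_smul_right, hTinv, starRingEnd_apply,
      star_trivial]
    ring
  -- polarization
  have hpol : ⟪T vp, v⟫ = ⟪T m, m⟫ - ⟪T d, d⟫ := by
    have hvp : vp = m + d := by rw [hm, hd, ← smul_add]; module
    have hv : v = m - d := by rw [hm, hd, ← smul_sub]; module
    rw [hvp, hv]
    simp only [map_add, inner_add_left, inner_sub_right]
    have := hTsym d m
    have := hTsym m d
    have hsym2 : ⟪T d, m⟫ = ⟪T m, d⟫ := by
      rw [hTsym d m, real_inner_comm, hTsym m d, real_inner_comm]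
    linarith [hsym2]
  have hLnn : 0 ≤ ⟪L Sg, Tinv (L Sg)⟫ := by
    have : ⟪L Sg, Tinv (L Sg)⟫ = ⟪T (Tinv (L Sg)), Tinv (L Sg)⟫ := by rw [hTinv]
    rw [this]; exact hTnn _
  have hΦnn : 0 ≤ Φ Sg := by
    have := hCFL Sg
    have h4 : 0 < 4 - η := by linarith
    have : 0 ≤ (τ^2/(4 - η)) * ⟪L Sg, Tinv (L Sg)⟫ :=
      mul_nonneg (div_nonneg (sq_nonneg τ) h4.le) hLnn
    linarith [hCFL Sg]
  have hCFL' : τ^2 * ⟪L Sg, Tinv (L Sg)⟫ ≤ (4 - η) * Φ Sg := by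
    have h4 : 0 < 4 - η := by linarith
    have := hCFL Sg
    rw [ge_iff_le, div_mul_eq_mul_div, div_le_iff₀ h4] at this
    linarith [this]
  have hmnn := hTnn m
  constructor
  · rw [hpol, hTd]
    nlinarith [hΦnn, hCFL']
  · rw [hpol, hTd]
    nlinarith [hΦnn, hCFL', hmnn]
end
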